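/- The unitary Cayley graph of Z_n for n = p₁^{r₁}⋯p_t^{r_t} (distinct primes p₁ < ⋯ < p_t) is connected whenever n > 1, and has diameter: 1 if t = 1 and r₁ = 1; 2 if t = 1 and r₁ > 1; 2 if t ≥ 2 and p₁ ≥ 3; 3 if t ≥ 2 and p₁ = 2. -/

import Mathlib

/-- The unitary Cayley graph of a commutative ring: vertices are ring elements,
with `x ~ y` iff `x ≠ y` and `x - y` is a unit. -/
def unitaryCayley (R : Type*) [CommRing R] : SimpleGraph R where
  Adj x y := x ≠ y ∧ IsUnit (x - y)
  symm := by
    constructor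
    rintro x y ⟨hne, hu⟩
    exact ⟨hne.symm, by simpa [neg_sub] using hu.neg⟩
  loopless := by constructor; rintro x ⟨h, -⟩; exact h rfl

/-- A packing `k`-coloring: every vertex gets a color in `{1, …, k}`, and any two
distinct vertices with the same color `i` are at distance greater than `i`
(`edist` equals `⊤` for unreachable pairs, which counts as distance greater than `i`). -/
def SimpleGraph.IsPackingColoring {V : Type*} (G : SimpleGraph V) (k : ℕ) (c : V → ℕ) : Prop :=
  (∀ v, 1 ≤ c v ∧ c v ≤ k) ∧
    ∀ u v, u ≠ v → c u = c v → (c u : ℕ∞) < G.edist u v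

/-- The packing chromatic number: the least `k` admitting a packing `k`-coloring. -/
noncomputable def SimpleGraph.packingChromaticNumber {V : Type*} (G : SimpleGraph V) : ℕ :=
  sInf {k | ∃ c : V → ℕ, G.IsPackingColoring k c}

/-- The independence number: the largest cardinality of a set of pairwise
nonadjacent vertices. -/
noncomputable def SimpleGraph.indepNumNat {V : Type*} (G : SimpleGraph V) : ℕ :=
  sSup {n | ∃ s : Finset V, (∀ u ∈ s, ∀ v ∈ s, u ≠ v → ¬ G.Adj u v) ∧ s.card = n}

/-- The tensor (direct, categorical) product of two simple graphs. -/
def tensorProd {V W : Type*} (G : SimpleGraph V) (H : SimpleGraph W) :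
    SimpleGraph (V × W) where
  Adj a b := G.Adj a.1 b.1 ∧ H.Adj a.2 b.2
  symm := ⟨fun _ _ ⟨h1, h2⟩ => ⟨h1.symm, h2.symm⟩⟩
  loopless := ⟨fun a h => G.loopless.irrefl a.1 h.1⟩

/-- The tensor (direct, categorical) product of a family of simple graphs. -/
def tensorPi {ι : Type*} [Nonempty ι] {V : ι → Type*} (G : ∀ i, SimpleGraph (V i)) :
    SimpleGraph (∀ i, V i) where
  Adj a b := ∀ i, (G i).Adj (a i) (b i)
  symm := ⟨fun _ _ h i => (h i).symm⟩
  loopless := ⟨fun a h => (G (Classical.arbitrary ι)).loopless.irrefl _ (h _)⟩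

section NT

lemma UC.coprime_of_forall_prime {n a : ℕ} (h : ∀ p, p.Prime → p ∣ n → ¬ p ∣ a) :
    Nat.Coprime a n := by
  by_contra hc
  have h2 : (Nat.gcd a n).minFac.Prime := Nat.minFac_prime hc
  have hd := Nat.minFac_dvd (Nat.gcd a n)
  exact h _ h2 (hd.trans (Nat.gcd_dvd_right a n)) (hd.trans (Nat.gcd_dvd_left a n))

lemma UC.key_two_step {n : ℕ} (hn : n ≠ 0) (d : ℕ)
    (h : ∀ p ∈ n.primeFactors, 3 ≤ p ∨ p ∣ d) :
    ∃ a : ℕ, Nat.Coprime a n ∧ Nat.Coprime (a + d) n := by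
  classical
  set A : ℕ → ℕ := fun p => if p ∣ d + 1 then p - 1 else 1 with hA
  have hs : ∀ p ∈ n.primeFactors, (id p : ℕ) ≠ 0 :=
    fun p hp => (Nat.prime_of_mem_primeFactors hp).pos.ne'
  have pp : Set.Pairwise n.primeFactors (Function.onFun Nat.Coprime id) := by
    intro p hp q hq hne
    exact (Nat.coprime_primes (Nat.prime_of_mem_primeFactors hp)
      (Nat.prime_of_mem_primeFactors hq)).mpr hne
  obtain ⟨k, hk⟩ := Nat.chineseRemainderOfFinset A id n.primeFactors hs pp
  have main : ∀ q, q.Prime → q ∣ n → ¬ q ∣ k ∧ ¬ q ∣ (k + d) := by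
    intro q hq hqn
    have hqmem : q ∈ n.primeFactors := Nat.mem_primeFactors.mpr ⟨hq, hqn, hn⟩
    have hmod : (k : ZMod q) = ((A q : ℕ) : ZMod q) :=
      (ZMod.natCast_eq_natCast_iff _ _ _).mpr (hk q hqmem)
    haveI : Fact (1 < q) := ⟨hq.one_lt⟩
    by_cases hdvd : q ∣ d + 1
    · have hq2 : q ≠ 2 := by
        rintro rfl
        rcases h 2 hqmem with h3 | hd2 <;> omega
      have hAq : (k : ZMod q) = -1 := by
        rw [hmod, hA]
        simp only [hdvd, if_true]
        rw [Nat.cast_sub hq.one_le, ZMod.natCast_self]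
        ring
      have hdq : ((d : ℕ) : ZMod q) = -1 := by
        have h0 : ((d + 1 : ℕ) : ZMod q) = 0 :=
          (ZMod.natCast_eq_zero_iff _ _).mpr hdvd
        push_cast at h0
        linear_combination h0
      have h2ne : (2 : ZMod q) ≠ 0 := by
        intro h0
        have h1 : ((2 : ℕ) : ZMod q) = 0 := by exact_mod_cast h0
        exact hq2 ((Nat.prime_dvd_prime_iff_eq hq Nat.prime_two).mp
          ((ZMod.natCast_eq_zero_iff _ _).mp h1))
      constructor
      · intro hdk
        have h0 := (ZMod.natCast_eq_zero_iff k q).mpr hdk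
        rw [hAq] at h0
        exact one_ne_zero (neg_eq_zero.mp h0)
      · intro hdk
        have h0 := (ZMod.natCast_eq_zero_iff _ q).mpr hdk
        push_cast at h0
        rw [hAq, hdq] at h0
        exact h2ne (by linear_combination -h0)
    · have hAq : (k : ZMod q) = 1 := by
        rw [hmod, hA]
        simp only [hdvd, if_false]
        exact Nat.cast_one
      have hd1 : ((d + 1 : ℕ) : ZMod q) ≠ 0 := fun h0 =>
        hdvd ((ZMod.natCast_eq_zero_iff _ _).mp h0)
      constructor
      · intro hdk
        have h0 := (ZMod.natCast_eq_zero_iff k q).mpr hdk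
        rw [hAq] at h0
        exact one_ne_zero h0
      · intro hdk
        have h0 := (ZMod.natCast_eq_zero_iff _ q).mpr hdk
        apply hd1
        push_cast at h0 ⊢
        rw [hAq] at h0
        linear_combination h0
  exact ⟨k, UC.coprime_of_forall_prime (fun p hp hpn => (main p hp hpn).1),
    UC.coprime_of_forall_prime (fun p hp hpn => (main p hp hpn).2)⟩

end NT

section Graph

open SimpleGraph

variable {n : ℕ}

lemma UC.adj (hn : 1 < n) {x y : ZMod n} (h : IsUnit (x - y)) :
    (unitaryCayley (ZMod n)).Adj x y := by
  haveI : Fact (1 < n) := ⟨hn⟩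
  refine ⟨fun he => ?_, h⟩
  rw [he, sub_self] at h
  exact h.ne_zero rfl

lemma UC.not_unit_of_dvd (hn : 1 < n) {q : ℕ} (hq : q.Prime) (hqn : q ∣ n) {x : ZMod n}
    (hdvd : q ∣ x.val) : ¬ IsUnit x := by
  haveI : NeZero n := ⟨by omega⟩
  intro hu
  rw [show x = ((x.val : ℕ) : ZMod n) by rw [ZMod.natCast_val, ZMod.cast_id]] at hu
  have hc := (ZMod.isUnit_iff_coprime _ _).mp hu
  have : q ∣ Nat.gcd x.val n := Nat.dvd_gcd hdvd hqn
  rw [Nat.Coprime] at hc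
  rw [hc] at this
  exact hq.one_lt.ne' (Nat.dvd_one.mp this)

lemma UC.edist_le_one (hn : 1 < n) {u v : ZMod n} (h : IsUnit (u - v)) :
    (unitaryCayley (ZMod n)).edist u v ≤ 1 :=
  le_of_eq (SimpleGraph.edist_eq_one_iff_adj.mpr (UC.adj hn h))

lemma UC.edist_le_two (hn : 1 < n) {u v a b : ZMod n}
    (ha : IsUnit a) (hb : IsUnit b) (hab : a + b = u - v) :
    (unitaryCayley (ZMod n)).edist u v ≤ 2 := by
  have h1 : (unitaryCayley (ZMod n)).Adj u (v + a) :=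
    UC.adj hn (by rw [show u - (v + a) = b by linear_combination -hab]; exact hb)
  have h2 : (unitaryCayley (ZMod n)).Adj (v + a) v := UC.adj hn (by simpa using ha)
  have hle := SimpleGraph.edist_le (SimpleGraph.Walk.cons h1
    (SimpleGraph.Walk.cons h2 SimpleGraph.Walk.nil))
  simpa using hle

lemma UC.edist_le_three (hn : 1 < n) {u v a b c : ZMod n}
    (ha : IsUnit a) (hb : IsUnit b) (hc : IsUnit c) (habc : a + b + c = u - v) :
    (unitaryCayley (ZMod n)).edist u v ≤ 3 := by
  have h1 : (unitaryCayley (ZMod n)).Adj u (v + a + b) :=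
    UC.adj hn (by rw [show u - (v + a + b) = c by linear_combination -habc]; exact hc)
  have h2 : (unitaryCayley (ZMod n)).Adj (v + a + b) (v + a) :=
    UC.adj hn (by simpa using hb)
  have h3 : (unitaryCayley (ZMod n)).Adj (v + a) v := UC.adj hn (by simpa using ha)
  have hle := SimpleGraph.edist_le (SimpleGraph.Walk.cons h1 (SimpleGraph.Walk.cons h2
    (SimpleGraph.Walk.cons h3 SimpleGraph.Walk.nil)))
  simpa using hle

lemma UC.two_le_edist (hn : 1 < n) {u v : ZMod n} (hne : u ≠ v) (hu : ¬ IsUnit (u - v)) :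
    2 ≤ (unitaryCayley (ZMod n)).edist u v := by
  have h0 : (unitaryCayley (ZMod n)).edist u v ≠ 0 :=
    (SimpleGraph.edist_pos_of_ne hne).ne'
  have h1 : (unitaryCayley (ZMod n)).edist u v ≠ 1 := by
    intro h
    exact hu (SimpleGraph.edist_eq_one_iff_adj.mp h).2
  cases he : (unitaryCayley (ZMod n)).edist u v using ENat.recTopCoe with
  | top => exact le_top
  | coe m =>
    rw [he] at h0 h1
    have hm0 : m ≠ 0 := by exact_mod_cast fun h => h0 (by exact_mod_cast h)
    have hm1 : m ≠ 1 := by exact_mod_cast fun h => h1 (by exact_mod_cast h)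
    exact_mod_cast show 2 ≤ m by omega

lemma UC.three_le_edist (hn : 1 < n) {u v : ZMod n} (hne : u ≠ v) (hu : ¬ IsUnit (u - v))
    (h2 : ∀ a b : ZMod n, IsUnit a → IsUnit b → a + b ≠ u - v) :
    3 ≤ (unitaryCayley (ZMod n)).edist u v := by
  by_contra hlt
  push_neg at hlt
  have hne_top : (unitaryCayley (ZMod n)).edist u v ≠ ⊤ := by
    intro h; rw [h] at hlt; exact (lt_irrefl _ (lt_of_le_of_lt le_top hlt))
  obtain ⟨w, hw⟩ := SimpleGraph.exists_walk_of_edist_ne_top hne_top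
  have hlen : w.length ≤ 2 := by
    have : ((w.length : ℕ∞)) < 3 := by rw [hw]; exact hlt
    exact_mod_cast Nat.lt_succ_iff.mp (by exact_mod_cast this)
  cases w with
  | nil => exact hne rfl
  | @cons _ m1 _ h1 w' =>
    cases w' with
    | nil => exact hu h1.2
    | @cons _ m2 _ hadj2 w'' =>
      have hl0 : w''.length = 0 := by
        simp only [SimpleGraph.Walk.length_cons] at hlen
        omega
      have hm2 : m2 = v := SimpleGraph.Walk.eq_of_length_eq_zero hl0
      exact h2 (u - m1) (m1 - m2) h1.2 hadj2.2 (by rw [← hm2]; ring)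

lemma UC.connected (hn : 1 < n) : (unitaryCayley (ZMod n)).Connected := by
  haveI : Fact (1 < n) := ⟨hn⟩
  haveI : NeZero n := ⟨by omega⟩
  rw [SimpleGraph.connected_iff]
  refine ⟨fun u v => ?_, ⟨0⟩⟩
  have key : ∀ k : ℕ, (unitaryCayley (ZMod n)).Reachable u (u + k) := by
    intro k
    induction k with
    | zero => simpa using SimpleGraph.Reachable.refl u
    | succ m ih =>
      refine ih.trans (SimpleGraph.Adj.reachable ?_)
      apply UC.adj hn
      rw [show (u + (m : ZMod n)) - (u + ((m + 1 : ℕ) : ZMod n)) = -1 by push_cast; ring]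
      exact isUnit_one.neg
  have hkey := key (v - u).val
  rw [ZMod.natCast_val, ZMod.cast_id] at hkey
  rwa [show u + (v - u) = v by ring] at hkey

end Graph

section Struct

open SimpleGraph

variable {n : ℕ}

lemma UC.primeFactors_eq (hn : 1 < n) (hc : n.primeFactors.card = 1) :
    n.primeFactors = {n.minFac} := by
  obtain ⟨p, hp⟩ := Finset.card_eq_one.mp hc
  have hmem : n.minFac ∈ n.primeFactors :=
    Nat.mem_primeFactors.mpr ⟨Nat.minFac_prime (by omega), Nat.minFac_dvd n, by omega⟩
  rw [hp] at hmem ⊢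
  rw [Finset.mem_singleton] at hmem
  rw [hmem]

lemma UC.prime_of (hn : 1 < n) (hc : n.primeFactors.card = 1)
    (hr : n.factorization n.minFac = 1) : n.Prime := by
  have hfac := UC.primeFactors_eq hn hc
  have hpp : n.minFac.Prime := Nat.minFac_prime (by omega)
  by_cases hm1 : ordCompl[n.minFac] n = 1
  · have hself := Nat.ordProj_mul_ordCompl_eq_self n n.minFac
    rw [hm1, mul_one, hr, pow_one] at hself
    rw [← hself]
    exact hpp
  · exfalso
    have hq : (ordCompl[n.minFac] n).minFac.Prime := Nat.minFac_prime hm1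
    have hqn : (ordCompl[n.minFac] n).minFac ∣ n :=
      (Nat.minFac_dvd _).trans (Nat.ordCompl_dvd n n.minFac)
    have hqmem : (ordCompl[n.minFac] n).minFac ∈ n.primeFactors :=
      Nat.mem_primeFactors.mpr ⟨hq, hqn, by omega⟩
    rw [hfac, Finset.mem_singleton] at hqmem
    exact Nat.not_dvd_ordCompl hpp (by omega) (hqmem ▸ Nat.minFac_dvd _)

lemma UC.not_prime_min_lt (hn : 1 < n) (hnp : ¬ n.Prime) : n.minFac < n := by
  have h1 : n.minFac ∣ n := Nat.minFac_dvd n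
  have h2 : n.minFac ≤ n := Nat.le_of_dvd (by omega) h1
  rcases lt_or_eq_of_le h2 with h | h
  · exact h
  · exact absurd (h ▸ Nat.minFac_prime (show n ≠ 1 by omega)) hnp

/-- The canonical non-unit, nonzero vertex when `n` is composite. -/
lemma UC.exists_bad_vertex (hn : 1 < n) (hnp : ¬ n.Prime) :
    ∃ c : ZMod n, c ≠ 0 ∧ ¬ IsUnit c := by
  haveI : NeZero n := ⟨by omega⟩
  have hlt : n.minFac < n := UC.not_prime_min_lt hn hnp
  have hpp : n.minFac.Prime := Nat.minFac_prime (by omega)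
  refine ⟨((n.minFac : ℕ) : ZMod n), ?_, ?_⟩
  · intro h0
    have := (ZMod.val_eq_zero _).mpr h0
    rw [ZMod.val_cast_of_lt hlt] at this
    exact hpp.pos.ne' this
  · exact UC.not_unit_of_dvd hn hpp (Nat.minFac_dvd n)
      (by rw [ZMod.val_cast_of_lt hlt])

lemma UC.exists_prime_dvd (hn : 1 < n) {x : ZMod n} (h : ¬ IsUnit x) :
    ∃ q, q.Prime ∧ q ∣ n ∧ q ∣ x.val := by
  haveI : NeZero n := ⟨by omega⟩
  have hc : ¬ Nat.Coprime x.val n := by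
    intro hc
    apply h
    rw [show x = ((x.val : ℕ) : ZMod n) by rw [ZMod.natCast_val, ZMod.cast_id]]
    exact (ZMod.isUnit_iff_coprime _ _).mpr hc
  exact ⟨(Nat.gcd x.val n).minFac, Nat.minFac_prime hc,
    (Nat.minFac_dvd _).trans (Nat.gcd_dvd_right _ _),
    (Nat.minFac_dvd _).trans (Nat.gcd_dvd_left _ _)⟩

lemma UC.edist_le_two_of_cond (hn : 1 < n) {u v : ZMod n}
    (h : ∀ p ∈ n.primeFactors, 3 ≤ p ∨ p ∣ (u - v).val) :
    (unitaryCayley (ZMod n)).edist u v ≤ 2 := by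
  haveI : NeZero n := ⟨by omega⟩
  obtain ⟨a, h1, h2⟩ := UC.key_two_step (by omega) ((u - v).val) h
  refine UC.edist_le_two hn (a := ((a + (u - v).val : ℕ) : ZMod n)) (b := -((a : ℕ) : ZMod n))
    ((ZMod.isUnit_iff_coprime _ n).mpr h2) (((ZMod.isUnit_iff_coprime a n).mpr h1).neg) ?_
  push_cast
  rw [ZMod.natCast_val, ZMod.cast_id]
  ring

lemma UC.diam_eq_of_ediam {k : ℕ} (h : (unitaryCayley (ZMod n)).ediam = (k : ℕ∞)) :
    (unitaryCayley (ZMod n)).diam = k := by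
  rw [SimpleGraph.diam, h]
  simp

end Struct


theorem stmt8 (n : ℕ) (hn : 1 < n) :
    (unitaryCayley (ZMod n)).Connected ∧
    ((n.primeFactors.card = 1 ∧ n.factorization n.minFac = 1) →
      (unitaryCayley (ZMod n)).diam = 1) ∧
    ((n.primeFactors.card = 1 ∧ 1 < n.factorization n.minFac) →
      (unitaryCayley (ZMod n)).diam = 2) ∧
    ((2 ≤ n.primeFactors.card ∧ 3 ≤ n.minFac) →
      (unitaryCayley (ZMod n)).diam = 2) ∧
    ((2 ≤ n.primeFactors.card ∧ n.minFac = 2) →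
      (unitaryCayley (ZMod n)).diam = 3) := by
  haveI : Fact (1 < n) := ⟨hn⟩
  haveI : NeZero n := ⟨by omega⟩
  refine ⟨UC.connected hn, ?_, ?_, ?_, ?_⟩
  · -- n prime : diam 1
    rintro ⟨hc, hr⟩
    have hp : n.Prime := UC.prime_of hn hc hr
    haveI : Fact n.Prime := ⟨hp⟩
    have hG : unitaryCayley (ZMod n) = ⊤ := by
      ext x y
      show (x ≠ y ∧ IsUnit (x - y)) ↔ x ≠ y
      exact ⟨fun h => h.1, fun hxy => ⟨hxy, isUnit_iff_ne_zero.mpr (sub_ne_zero.mpr hxy)⟩⟩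
    rw [hG]
    exact SimpleGraph.diam_top
  · -- prime power, exponent > 1 : diam 2
    rintro ⟨hc, hr⟩
    have hnp : ¬ n.Prime := by
      intro hp
      rcases hp.eq_one_or_self_of_dvd _ (Nat.minFac_dvd n) with h1 | h1
      · exact (Nat.minFac_prime (show n ≠ 1 by omega)).one_lt.ne' h1
      · rw [h1, Nat.Prime.factorization_self hp] at hr
        exact lt_irrefl 1 hr
    have hub : ∀ u v : ZMod n, (unitaryCayley (ZMod n)).edist u v ≤ 2 := by
      intro u v
      by_cases huv : u = v
      · rw [huv, SimpleGraph.edist_self]; exact zero_le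
      by_cases hu : IsUnit (u - v)
      · exact le_trans (UC.edist_le_one hn hu) (by norm_num)
      · apply UC.edist_le_two_of_cond hn
        intro p hp
        right
        obtain ⟨q, hq, hqn, hqd⟩ := UC.exists_prime_dvd hn hu
        have hq' : q ∈ n.primeFactors := Nat.mem_primeFactors.mpr ⟨hq, hqn, by omega⟩
        rw [UC.primeFactors_eq hn hc, Finset.mem_singleton] at hp hq'
        rw [hp, ← hq']
        exact hqd
    obtain ⟨c, hc0, hcu⟩ := UC.exists_bad_vertex hn hnp
    have hlow : 2 ≤ (unitaryCayley (ZMod n)).edist c 0 :=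
      UC.two_le_edist hn hc0 (by rwa [sub_zero])
    have hed : (unitaryCayley (ZMod n)).ediam = 2 :=
      le_antisymm (SimpleGraph.ediam_le_of_edist_le hub)
        (le_trans hlow SimpleGraph.edist_le_ediam)
    exact UC.diam_eq_of_ediam (k := 2) (by exact_mod_cast hed)
  · -- at least two primes, all odd : diam 2
    rintro ⟨hc, hmf⟩
    have hnp : ¬ n.Prime := by
      intro hp
      rw [hp.primeFactors] at hc
      simp at hc
    have hub : ∀ u v : ZMod n, (unitaryCayley (ZMod n)).edist u v ≤ 2 := by
      intro u v
      by_cases huv : u = v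
      · rw [huv, SimpleGraph.edist_self]; exact zero_le
      · apply UC.edist_le_two_of_cond hn
        intro p hp
        left
        have hple := Nat.minFac_le_of_dvd (Nat.prime_of_mem_primeFactors hp).two_le
          (Nat.dvd_of_mem_primeFactors hp)
        omega
    obtain ⟨c, hc0, hcu⟩ := UC.exists_bad_vertex hn hnp
    have hlow : 2 ≤ (unitaryCayley (ZMod n)).edist c 0 :=
      UC.two_le_edist hn hc0 (by rwa [sub_zero])
    have hed : (unitaryCayley (ZMod n)).ediam = 2 :=
      le_antisymm (SimpleGraph.ediam_le_of_edist_le hub)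
        (le_trans hlow SimpleGraph.edist_le_ediam)
    exact UC.diam_eq_of_ediam (k := 2) (by exact_mod_cast hed)
  · -- at least two primes, n even : diam 3
    rintro ⟨hc, hmf⟩
    have h2n : (2 : ℕ) ∣ n := hmf ▸ Nat.minFac_dvd n
    set φ : ZMod n →+* ZMod 2 := ZMod.castHom h2n (ZMod 2) with hφ
    have hcast : ∀ x : ZMod n, ((x.val : ℕ) : ZMod 2) = φ x := by
      intro x
      rw [ZMod.natCast_val, hφ, ZMod.castHom_apply]
    have hz2 : ∀ z : ZMod 2, z = 0 ∨ z = 1 := by decide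
    have hunit2 : ∀ z : ZMod 2, IsUnit z → z = 1 := by
      intro z hz
      rcases hz2 z with h | h
      · rw [h] at hz
        exact absurd hz not_isUnit_zero
      · exact h
    -- upper bound
    have hub : ∀ u v : ZMod n, (unitaryCayley (ZMod n)).edist u v ≤ 3 := by
      intro u v
      by_cases huv : u = v
      · rw [huv, SimpleGraph.edist_self]; exact zero_le
      by_cases hu : IsUnit (u - v)
      · exact le_trans (UC.edist_le_one hn hu) (by norm_num)
      by_cases hpar : φ (u - v) = 0
      · refine le_trans (UC.edist_le_two_of_cond hn ?_) (by norm_num)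
        intro p hp
        have hpp := Nat.prime_of_mem_primeFactors hp
        by_cases hp2 : p = 2
        · right
          rw [hp2]
          rw [← ZMod.natCast_eq_zero_iff]
          rw [hcast]
          exact hpar
        · left
          have := hpp.two_le
          omega
      · -- u - v is odd; use 1 + (two units)
        have hpar1 : φ (u - v) = 1 := by
          rcases hz2 (φ (u - v)) with h | h
          · exact absurd h hpar
          · exact h
        have hparE : φ (u - v - 1) = 0 := by
          rw [map_sub, map_one, hpar1, sub_self]
        have hcond : ∀ p ∈ n.primeFactors, 3 ≤ p ∨ p ∣ (u - v - 1).val := by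
          intro p hp
          have hpp := Nat.prime_of_mem_primeFactors hp
          by_cases hp2 : p = 2
          · right
            rw [hp2, ← ZMod.natCast_eq_zero_iff, hcast]
            exact hparE
          · left
            have := hpp.two_le
            omega
        obtain ⟨a, h1, h2⟩ := UC.key_two_step (show n ≠ 0 by omega) ((u - v - 1).val) hcond
        refine UC.edist_le_three hn (a := (1 : ZMod n))
            (b := ((a + (u - v - 1).val : ℕ) : ZMod n)) (c := -((a : ℕ) : ZMod n))
            isUnit_one ((ZMod.isUnit_iff_coprime _ n).mpr h2)
            (((ZMod.isUnit_iff_coprime a n).mpr h1).neg) ?_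
        push_cast
        rw [ZMod.natCast_val, ZMod.cast_id]
        ring
    -- lower bound : vertex c with c odd, c nonunit
    have h2mem : (2 : ℕ) ∈ n.primeFactors :=
      Nat.mem_primeFactors.mpr ⟨Nat.prime_two, h2n, by omega⟩
    obtain ⟨q, hqmem, hq2⟩ := Finset.exists_mem_ne (s := n.primeFactors) (by omega) 2
    have hq : q.Prime := Nat.prime_of_mem_primeFactors hqmem
    have hqn : q ∣ n := Nat.dvd_of_mem_primeFactors hqmem
    have hco : Nat.Coprime 2 q := (Nat.coprime_primes Nat.prime_two hq).mpr (Ne.symm hq2)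
    obtain ⟨k, hk1, hk2⟩ := Nat.chineseRemainder hco 1 0
    set c : ZMod n := ((k : ℕ) : ZMod n) with hcdef
    have hφc : φ c = 1 := by
      rw [hcdef, map_natCast]
      have : ((k : ℕ) : ZMod 2) = ((1 : ℕ) : ZMod 2) :=
        (ZMod.natCast_eq_natCast_iff _ _ _).mpr hk1
      rw [this, Nat.cast_one]
    have hc0 : c ≠ 0 := by
      intro h0
      rw [h0, map_zero] at hφc
      exact one_ne_zero hφc.symm
    have hqk : q ∣ k := (Nat.modEq_zero_iff_dvd).mp hk2
    have hqval : q ∣ c.val := by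
      rw [hcdef, ZMod.val_natCast]
      exact (Nat.dvd_mod_iff hqn).mpr hqk
    have hcu : ¬ IsUnit c := UC.not_unit_of_dvd hn hq hqn hqval
    have hno2 : ∀ a b : ZMod n, IsUnit a → IsUnit b → a + b ≠ c - 0 := by
      intro a b ha hb heq
      have hφa : φ a = 1 := hunit2 _ (ha.map φ)
      have hφb : φ b = 1 := hunit2 _ (hb.map φ)
      have : φ (a + b) = φ (c - 0) := by rw [heq]
      rw [map_add, hφa, hφb, sub_zero, hφc] at this
      have h110 : (1 : ZMod 2) + 1 = 0 := by decide
      rw [h110] at this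
      exact one_ne_zero this.symm
    have hlow : 3 ≤ (unitaryCayley (ZMod n)).edist c 0 :=
      UC.three_le_edist hn hc0 (by rwa [sub_zero]) hno2
    have hed : (unitaryCayley (ZMod n)).ediam = 3 :=
      le_antisymm (SimpleGraph.ediam_le_of_edist_le hub)
        (le_trans hlow SimpleGraph.edist_le_ediam)
    exact UC.diam_eq_of_ediam (k := 3) (by exact_mod_cast hed)
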